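/- Let s ≥ 1, m ≥ 2, and let W(x₁, ..., xₛ) be a nontrivial positive word in the free group on x₁, ..., xₛ that involves both x₁ and xₛ. Let H_W be the group with presentation ⟨aₙ (n ∈ ℤ) | a_{n+1}(W(a_{n−s+1}, ..., aₙ) a_{n+2}) a_{n+1}⁻¹ = (W(a_{n−s+1}, ..., aₙ) a_{n+2})ᵐ for all n ∈ ℤ⟩. Then for every 0 ≤ n ≤ s, the subgroup of H_W generated by a₀, a₁, ..., aₙ is a free group of rank n+1, freely generated by a₀, ..., aₙ. -/

import Mathlib

namespace HW

/-- The substituted positive word `W(a_{n-s+1}, …, aₙ)` in the free group on the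
generators `aₖ`, `k ∈ ℤ`: the positive word `W` in `x₁, …, xₛ` is encoded by the
(nonempty) list `w` of its letters, where an entry `j : Fin s` stands for the generator
`x_{j+1}`, which is substituted by `a_{n-s+1+j}`. -/
def Wsub {s : ℕ} (w : List (Fin s)) (n : ℤ) : FreeGroup ℤ :=
  (w.map fun j => FreeGroup.of (n - s + 1 + (j : ℕ))).prod

/-- The relators
`a_{n+1} (W(a_{n-s+1},…,aₙ) a_{n+2}) a_{n+1}⁻¹ ((W(a_{n-s+1},…,aₙ) a_{n+2})ᵐ)⁻¹`,
`n ∈ ℤ`. -/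
def HWrels (s m : ℕ) (w : List (Fin s)) : Set (FreeGroup ℤ) :=
  {r | ∃ n : ℤ, r = FreeGroup.of (n + 1) * (Wsub w n * FreeGroup.of (n + 2)) *
    (FreeGroup.of (n + 1))⁻¹ * ((Wsub w n * FreeGroup.of (n + 2)) ^ m)⁻¹}

/-- The group `H_W`. -/
abbrev Hgroup (s m : ℕ) (w : List (Fin s)) : Type := PresentedGroup (HWrels s m w)

end HW


namespace HWProof


/-- product over a list where all values except at `a₀` are `1`. -/
lemma list_prod_eq_pow_count {γ : Type*} [DecidableEq γ] {M : Type*} [CommMonoid M]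
    (l : List γ) (a₀ : γ) (g : γ → M) (h : ∀ a ∈ l, a ≠ a₀ → g a = 1) :
    (l.map g).prod = g a₀ ^ l.count a₀ := by
  induction l with
  | nil => simp
  | cons b t ih =>
    simp only [List.map_cons, List.prod_cons, List.count_cons]
    rw [ih (fun a ha hne => h a (List.mem_cons_of_mem _ ha) hne)]
    by_cases hb : b = a₀
    · subst hb; simp [pow_succ, mul_comm]
    · rw [h b (List.mem_cons_self) hb]; simp [hb]

lemma multiplicative_pow_eq_one {z : Multiplicative ℤ} {c : ℕ} (hc : c ≠ 0)
    (h : z ^ c = 1) : z = 1 := by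
  have : (c : ℤ) * z.toAdd = 0 := by
    have := congrArg Multiplicative.toAdd h
    simpa [toAdd_pow, nsmul_eq_mul] using this
  rcases mul_eq_zero.mp this with h' | h'
  · exact absurd (by exact_mod_cast h') hc
  · have : z.toAdd = 0 := h'
    exact Multiplicative.toAdd.injective (by simpa using this)

/-- Extend a partial injection on a finite type to a permutation. -/
lemma exists_perm_of_partial {α : Type*} [Fintype α] [DecidableEq α]
    (p : α → Option α) (hinj : ∀ {x y z : α}, p x = some z → p y = some z → x = y) :
    ∃ σ : Equiv.Perm α, ∀ {x y : α}, p x = some y → σ x = y := by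
  classical
  set D : Finset α := Finset.univ.filter (fun x => (p x).isSome) with hD
  set R : Finset α := Finset.univ.filter (fun z => ∃ x, p x = some z) with hR
  have hcard : D.card = R.card := by
    apply Finset.card_bij (fun x hx => (p x).get (by simpa [hD] using hx))
    · intro a ha
      simp only [hR, Finset.mem_filter, Finset.mem_univ, true_and]
      exact ⟨a, Option.some_get _ |>.symm⟩
    · intro a ha b hb hab
      have ha' : p a = some ((p a).get (by simpa [hD] using ha)) := (Option.some_get _).symm
      have hb' : p b = some ((p b).get (by simpa [hD] using hb)) := (Option.some_get _).symm
      exact hinj ha' (hab ▸ hb')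
    · intro z hz
      simp only [hR, Finset.mem_filter, Finset.mem_univ, true_and] at hz
      obtain ⟨x, hx⟩ := hz
      have hxD : x ∈ D := by simp [hD, hx]
      refine ⟨x, hxD, ?_⟩
      simp [hx]
  have hcompl : Dᶜ.card = Rᶜ.card := by
    simp [Finset.card_compl, hcard]
  set e := Finset.equivOfCardEq hcompl with he
  set f : α → α := fun x => if h : x ∈ D then (p x).get (by simpa [hD] using h)
    else (e ⟨x, by simpa using h⟩ : α) with hf
  have hfinj : Function.Injective f := by
    intro x y hxy
    by_cases hx : x ∈ D <;> by_cases hy : y ∈ D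
    · simp only [hf, dif_pos hx, dif_pos hy] at hxy
      exact hinj ((Option.some_get _).symm.trans (by rw [hxy]))
        ((Option.some_get _).symm)
    · exfalso
      simp only [hf, dif_pos hx, dif_neg hy] at hxy
      have h1 : f x ∈ R := by
        simp only [hR, Finset.mem_filter, Finset.mem_univ, true_and]
        exact ⟨x, by simp [hf, dif_pos hx]⟩
      have h2 : (e ⟨y, by simpa using hy⟩ : α) ∈ Rᶜ := (e ⟨y, by simpa using hy⟩).2
      rw [hf] at h1; simp only [dif_pos hx] at h1
      rw [hxy] at h1
      exact (Finset.mem_compl.mp h2) h1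
    · exfalso
      simp only [hf, dif_neg hx, dif_pos hy] at hxy
      have h1 : f y ∈ R := by
        simp only [hR, Finset.mem_filter, Finset.mem_univ, true_and]
        exact ⟨y, by simp [hf, dif_pos hy]⟩
      have h2 : (e ⟨x, by simpa using hx⟩ : α) ∈ Rᶜ := (e ⟨x, by simpa using hx⟩).2
      rw [hf] at h1; simp only [dif_pos hy] at h1
      rw [← hxy] at h1
      exact (Finset.mem_compl.mp h2) h1
    · simp only [hf, dif_neg hx, dif_neg hy] at hxy
      have := e.injective (Subtype.ext hxy)
      simpa using congrArg Subtype.val this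
  refine ⟨Equiv.ofBijective f (Finite.injective_iff_bijective.mp hfinj), ?_⟩
  intro x y hxy
  have hx : x ∈ D := by simp [hD, hxy]
  show f x = y
  simp only [hf, dif_pos hx]
  simp [hxy]



/-- no cancelling adjacent pair in a reduced word -/
lemma no_adjacent {α : Type*} [DecidableEq α] {L : List (α × Bool)}
    (hL : FreeGroup.reduce L = L) {k : ℕ} {a : α} {b : Bool}
    (h1 : L[k]? = some (a, b)) (h2 : L[k+1]? = some (a, !b)) : False := by
  obtain ⟨hk1, hv1⟩ := List.getElem?_eq_some_iff.mp h1
  obtain ⟨hk2, hv2⟩ := List.getElem?_eq_some_iff.mp h2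
  have hdecomp : L = L.take k ++ (a, b) :: (a, !b) :: L.drop (k + 2) := by
    conv_lhs => rw [← List.take_append_drop k L]
    congr 1
    rw [List.drop_eq_getElem_cons hk1, hv1]
    congr 1
    rw [List.drop_eq_getElem_cons hk2, hv2]
  exact FreeGroup.reduce.not (hL.trans hdecomp)


/-- residual finiteness of free groups, via permutation groups -/
lemma rf_free {q : ℕ} (x : FreeGroup (Fin q)) (hx : x ≠ 1) :
    ∃ (M : ℕ) (φ : FreeGroup (Fin q) →* Equiv.Perm (Fin (M + 1))), φ x ≠ 1 := by
  classical
  set L := x.toWord with hLdef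
  have hred : FreeGroup.reduce L = L := FreeGroup.reduce_toWord x
  set M := L.length with hM
  have hM0 : M ≠ 0 := by
    intro h
    exact hx (FreeGroup.toWord_eq_nil_iff.mp (List.length_eq_zero_iff.mp h))
  set p : Fin q → Fin (M+1) → Option (Fin (M+1)) := fun a j =>
    if h1 : j.1 < M ∧ L[M-1-j.1]? = some (a, true) then some ⟨j.1+1, by omega⟩
    else if h2 : 0 < j.1 ∧ L[M-j.1]? = some (a, false) then some ⟨j.1-1, by omega⟩
    else none with hp
  have pchar : ∀ (a : Fin q) (j z : Fin (M+1)), p a j = some z →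
      (j.1 < M ∧ L[M-1-j.1]? = some (a,true) ∧ z.1 = j.1+1) ∨
      (0 < j.1 ∧ L[M-j.1]? = some (a,false) ∧ z.1 = j.1 - 1) := by
    intro a j z h
    rw [hp] at h
    dsimp only at h
    split_ifs at h with h1 h2
    · left
      have := congrArg Fin.val (Option.some_injective _ h)
      exact ⟨h1.1, h1.2, by simpa using this.symm⟩
    · right
      have := congrArg Fin.val (Option.some_injective _ h)
      exact ⟨h2.1, h2.2, by simpa using this.symm⟩
  have mixed : ∀ (a : Fin q) (u' v' : Fin (M+1)),
      (u'.1 < M ∧ L[M-1-u'.1]? = some (a, true)) →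
      (0 < v'.1 ∧ L[M-v'.1]? = some (a, false)) → u'.1 + 1 = v'.1 - 1 → False := by
    rintro a u' v' ⟨hu1, hu2⟩ ⟨hv1, hv2⟩ heq
    have hvM : v'.1 ≤ M := by
      rcases List.getElem?_eq_some_iff.mp hv2 with ⟨hlt, _⟩
      omega
    have hv'eq : v'.1 = u'.1 + 2 := by omega
    rw [hv'eq] at hv2
    have h1' : L[M - u'.1 - 2]? = some (a, false) := by
      have : M - (u'.1 + 2) = M - u'.1 - 2 := by omega
      rwa [this] at hv2
    have h2' : L[M - u'.1 - 2 + 1]? = some (a, !false) := by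
      have hpos : M - u'.1 - 2 + 1 = M - 1 - u'.1 := by omega
      rw [hpos]; simpa using hu2
    exact no_adjacent hred h1' h2'
  have hinj : ∀ a : Fin q, ∀ {u v z : Fin (M+1)}, p a u = some z → p a v = some z → u = v := by
    intro a u v z hu hv
    rcases pchar a u z hu with ⟨c1, c2, c3⟩ | ⟨c1, c2, c3⟩ <;>
      rcases pchar a v z hv with ⟨d1, d2, d3⟩ | ⟨d1, d2, d3⟩
    · exact Fin.ext (by omega)
    · exact (mixed a u v ⟨c1, c2⟩ ⟨d1, d2⟩ (by omega)).elim
    · exact (mixed a v u ⟨d1, d2⟩ ⟨c1, c2⟩ (by omega)).elim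
    · exact Fin.ext (by omega)
  -- choose permutations
  choose σ hσ using fun a => exists_perm_of_partial (p a) (hinj a)
  -- evaluation: up moves
  have up_eval : ∀ (k : ℕ) (hk : k < M) (a : Fin q), L[M-1-k]? = some (a, true) →
      σ a ⟨k, by omega⟩ = ⟨k+1, by omega⟩ := by
    intro k hk a hL'
    apply hσ a
    rw [hp]
    dsimp only
    rw [dif_pos ⟨hk, hL'⟩]
  have dn_eval : ∀ (k : ℕ) (hk : k < M) (a : Fin q), L[M-1-k]? = some (a, false) →
      σ a ⟨k+1, by omega⟩ = ⟨k, by omega⟩ := by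
    intro k hk a hL'
    apply hσ a
    rw [hp]
    dsimp only
    have hnot : ¬ ((k+1 < M) ∧ L[M-1-(k+1)]? = some (a, true)) := by
      rintro ⟨hkM, hup⟩
      have h1' : L[M-k-2]? = some (a, true) := by
        have : M - 1 - (k+1) = M - k - 2 := by omega
        rwa [this] at hup
      have h2' : L[M-k-2+1]? = some (a, !true) := by
        have : M - k - 2 + 1 = M - 1 - k := by omega
        rw [this]; simpa using hL'
      exact no_adjacent hred h1' h2'
    rw [dif_neg hnot, dif_pos ⟨by omega, by
      have : M - (k+1) = M - 1 - k := by omega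
      rw [this]; exact hL'⟩]
    exact congrArg some (by ext; simp)
  -- the homomorphism
  refine ⟨M, FreeGroup.lift (fun a => σ a), ?_⟩
  have main : ∀ (k : ℕ) (hk : k ≤ M),
      ((L.drop (M-k)).map (fun l => cond l.2 (σ l.1) (σ l.1)⁻¹)).prod ⟨0, by omega⟩
        = ⟨k, by omega⟩ := by
    intro k
    induction k with
    | zero =>
      intro _
      have hnil : L.drop (M - 0) = [] := by rw [Nat.sub_zero, hM]; exact List.drop_length
      rw [hnil]
      simp
    | succ k ih =>
      intro hk
      have h2 : M - k - 1 < L.length := by omega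
      have hdrop : L.drop (M-k-1) = L[M-k-1] :: L.drop (M-k) := by
        rw [List.drop_eq_getElem_cons h2]
        have h3 : M - k - 1 + 1 = M - k := by omega
        rw [h3]
      have hsplit : ((L.drop (M-(k+1))).map (fun l => cond l.2 (σ l.1) (σ l.1)⁻¹)).prod
          = (cond (L[M-k-1]'(by omega)).2 (σ (L[M-k-1]'(by omega)).1) (σ (L[M-k-1]'(by omega)).1)⁻¹)
            * ((L.drop (M-k)).map (fun l => cond l.2 (σ l.1) (σ l.1)⁻¹)).prod := by
        conv_lhs => rw [show M-(k+1) = M-k-1 from by omega, hdrop]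
        simp
      rw [hsplit, Equiv.Perm.mul_apply, ih (by omega)]
      have hget : L[M-k-1]? = some (L[M-k-1]'(by omega)) := List.getElem?_eq_getElem (by omega)
      have hMk : M - 1 - k = M - k - 1 := by omega
      rcases hL' : L[M-k-1]'(by omega) with ⟨a, b⟩
      cases b
      · -- inverse of σ a
        rw [hL'] at hget
        simp only [cond_false]
        have := dn_eval k (by omega) a (by rw [hMk]; exact hget)
        rw [← this]
        simp
      · rw [hL'] at hget
        simp only [cond_true]
        exact up_eval k (by omega) a (by rw [hMk]; exact hget)
  intro hcontra
  have h0 : (FreeGroup.lift (fun a => σ a)) x = 1 := hcontra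
  have hx' : (FreeGroup.lift (fun a => σ a)) x ⟨0, by omega⟩ = ⟨0, by omega⟩ := by
    rw [h0]; rfl
  have : (FreeGroup.lift (fun a => σ a)) x = ((L.map (fun l => cond l.2 (σ l.1) (σ l.1)⁻¹)).prod) := by
    conv_lhs => rw [← FreeGroup.mk_toWord (x := x)]
    rw [FreeGroup.lift_mk]
  rw [this] at hx'
  have := main M (le_refl M)
  rw [Nat.sub_self, List.drop_zero] at this
  rw [this] at hx'
  have := congrArg Fin.val hx'
  simp at this
  omega




/-- f.g. free groups are Hopfian (via residual finiteness, Malcev's argument). -/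
lemma hopf {q : ℕ} (θ : FreeGroup (Fin q) →* FreeGroup (Fin q))
    (hsurj : Function.Surjective θ) {x : FreeGroup (Fin q)} (hθx : θ x = 1) : x = 1 := by
  by_contra hne
  obtain ⟨M, φ, hφ⟩ := rf_free x hne
  haveI : Finite (FreeGroup (Fin q) →* Equiv.Perm (Fin (M + 1))) :=
    Finite.of_injective _ FreeGroup.lift.symm.injective
  set c : (FreeGroup (Fin q) →* Equiv.Perm (Fin (M + 1))) →
      (FreeGroup (Fin q) →* Equiv.Perm (Fin (M + 1))) := fun h => h.comp θ with hc
  have hcinj : Function.Injective c := by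
    intro h h' he
    apply MonoidHom.ext
    intro y
    obtain ⟨z, rfl⟩ := hsurj y
    exact DFunLike.congr_fun he z
  obtain ⟨h₀, hh₀⟩ := (Finite.injective_iff_surjective.mp hcinj) φ
  apply hφ
  rw [← hh₀]
  show h₀ (θ x) = 1
  rw [hθx, map_one]

/-- If a homomorphism between f.g. free groups of equal rank is injective after
applying arbitrary characters (i.e. "abelianization-injective"), it is injective. -/
lemma key_inj {q : ℕ} (Ψ : FreeGroup (Fin q) →* FreeGroup (Fin q))
    (hab : ∀ χ : FreeGroup (Fin q) →* Multiplicative ℤ, χ.comp Ψ = 1 → χ = 1) :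
    Function.Injective Ψ := by
  classical
  set H := Ψ.range with hH
  set bH := IsFreeGroup.basis H with hbH
  set π := Ψ.rangeRestrict with hπ
  have hπsurj : Function.Surjective π := Ψ.rangeRestrict_surjective
  have hcomp : H.subtype.comp π = Ψ := Ψ.subtype_comp_rangeRestrict
  set Q2 := Multiplicative (ZMod 2) with hQ2
  -- upper bound on the number of generators of H
  set U : (IsFreeGroup.Generators H → Q2) → (Fin q → Q2) :=
    fun u => FreeGroup.lift.symm ((bH.lift u).comp π) with hU
  have hUinj : Function.Injective U := by
    intro u u' he
    have he' : (bH.lift u).comp π = (bH.lift u').comp π := FreeGroup.lift.symm.injective he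
    have : bH.lift u = bH.lift u' := by
      apply MonoidHom.ext
      intro y
      obtain ⟨z, rfl⟩ := hπsurj y
      exact DFunLike.congr_fun he' z
    exact bH.lift.injective this
  haveI : Finite (IsFreeGroup.Generators H → Q2) :=
    Finite.of_injective U hUinj
  haveI : Finite (IsFreeGroup.Generators H) := by
    have : Function.Injective (fun (b : IsFreeGroup.Generators H) =>
        (fun x => if x = b then Multiplicative.ofAdd (1 : ZMod 2) else 1 :
          IsFreeGroup.Generators H → Q2)) := by
      intro b b' he
      have h1 := congrFun he b'
      dsimp only at h1
      rw [if_pos rfl] at h1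
      by_cases hbb : b' = b
      · exact hbb.symm
      · exfalso
        rw [if_neg hbb] at h1
        have h2 : (1 : ZMod 2) = 0 := by
          have := Multiplicative.ofAdd.injective h1.symm
          simpa using this
        exact one_ne_zero h2
    exact Finite.of_injective _ this
  haveI : Fintype (IsFreeGroup.Generators H) := Fintype.ofFinite _
  have hcard_le : Fintype.card (IsFreeGroup.Generators H) ≤ q := by
    have h2 : (2:ℕ) ^ Fintype.card (IsFreeGroup.Generators H) ≤ 2 ^ q := by
      have := Fintype.card_le_of_injective U hUinj
      simpa [Fintype.card_fun, hQ2] using this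
    exact (Nat.pow_le_pow_iff_right (by norm_num)).mp h2
  -- lower bound via integral characters
  have hcard_ge : q ≤ Fintype.card (IsFreeGroup.Generators H) := by
    set V : (Fin q → ℤ) → (IsFreeGroup.Generators H → ℤ) := fun v x =>
      Multiplicative.toAdd ((FreeGroup.lift (fun i => Multiplicative.ofAdd (v i)))
        (((bH x : H) : FreeGroup (Fin q)))) with hV
    have hadd : ∀ v v', V (v + v') = V v + V v' := by
      intro v v'
      funext x
      have hhom : (FreeGroup.lift (fun i => Multiplicative.ofAdd ((v + v') i)) :
          FreeGroup (Fin q) →* Multiplicative ℤ)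
          = (FreeGroup.lift (fun i => Multiplicative.ofAdd (v i)) :
              FreeGroup (Fin q) →* Multiplicative ℤ)
            * FreeGroup.lift (fun i => Multiplicative.ofAdd (v' i)) := by
        apply FreeGroup.ext_hom
        intro a
        simp [ofAdd_add]
      calc V (v + v') x
          = Multiplicative.toAdd ((FreeGroup.lift (fun i => Multiplicative.ofAdd ((v + v') i)))
            (((bH x : H) : FreeGroup (Fin q)))) := rfl
        _ = (V v + V v') x := by
            rw [hhom]
            simp only [MonoidHom.mul_apply, toAdd_mul]
            rfl
    set Vhom : (Fin q → ℤ) →+ (IsFreeGroup.Generators H → ℤ) := AddMonoidHom.mk' V hadd with hVhom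
    have hVinj : Function.Injective Vhom := by
      rw [injective_iff_map_eq_zero]
      intro v hv
      set χ : FreeGroup (Fin q) →* Multiplicative ℤ :=
        FreeGroup.lift (fun i => Multiplicative.ofAdd (v i)) with hχ
      have hξ : χ.comp H.subtype = 1 := by
        apply bH.ext_hom
        intro x
        have := congrFun hv x
        have h1 : Multiplicative.toAdd ((χ.comp H.subtype) (bH x)) = 0 := this
        have h2 : (χ.comp H.subtype) (bH x) = 1 := by
          have := congrArg Multiplicative.ofAdd h1
          simpa using this
        simpa using h2
      have hΨ : χ.comp Ψ = 1 := by
        rw [← hcomp, ← MonoidHom.comp_assoc, hξ, MonoidHom.one_comp]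
      have hχ1 : χ = 1 := hab χ hΨ
      funext i
      have : χ (FreeGroup.of i) = 1 := by rw [hχ1]; rfl
      rw [hχ, FreeGroup.lift_apply_of] at this
      exact Multiplicative.ofAdd.injective (by simpa using this)
    have := LinearMap.finrank_le_finrank_of_injective
      (f := Vhom.toIntLinearMap) hVinj
    simpa [Module.finrank_pi] using this
  -- identify H with the free group of rank q
  set e : IsFreeGroup.Generators H ≃ Fin q :=
    Fintype.equivOfCardEq (by rw [le_antisymm hcard_le hcard_ge, Fintype.card_fin]) with he
  set μ : H ≃* FreeGroup (Fin q) := bH.repr.trans (FreeGroup.freeGroupCongr e) with hμ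
  set θ : FreeGroup (Fin q) →* FreeGroup (Fin q) := μ.toMonoidHom.comp π with hθ
  have hθsurj : Function.Surjective θ := μ.surjective.comp hπsurj
  rw [injective_iff_map_eq_one]
  intro x hx
  apply hopf θ hθsurj
  have hπx : π x = 1 := by
    apply Subtype.ext
    rw [MonoidHom.coe_rangeRestrict]
    simpa using hx
  simp [hθ, hπx]



variable {s : ℕ}

/-- substitution of the tuple `c` into the positive word `w` -/
def Wlet (w : List (Fin s)) {G : Type*} [Group G] (c : Fin (s+1) → G) : G :=
  (w.map fun j => c j.castSucc).prod

/-- the shifted tuple: drop `c 0`, append the new element given by the recursion -/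
def stepT (w : List (Fin s)) {G : Type*} [Group G] (c : Fin (s+1) → G) : Fin (s+1) → G :=
  fun i => if h : (i : ℕ) < s then c ⟨(i : ℕ)+1, by omega⟩ else (Wlet w c)⁻¹

lemma lift_Wlet {G : Type*} [Group G] (w : List (Fin s)) (c : Fin (s+1) → G) :
    (FreeGroup.lift c) (Wlet w FreeGroup.of) = Wlet w c := by
  rw [Wlet, map_list_prod, List.map_map, Wlet]
  congr 1
  apply List.map_congr_left
  intro j _
  simp [FreeGroup.lift_apply_of]

lemma lift_comp_psi {G : Type*} [Group G] (w : List (Fin s)) (c : Fin (s+1) → G) :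
    (FreeGroup.lift (stepT w c) : FreeGroup (Fin (s+1)) →* G)
      = (FreeGroup.lift c).comp (FreeGroup.lift (stepT w FreeGroup.of)) := by
  apply FreeGroup.ext_hom
  intro i
  rw [MonoidHom.comp_apply, FreeGroup.lift_apply_of, FreeGroup.lift_apply_of]
  by_cases h : (i : ℕ) < s
  · rw [stepT, stepT]
    rw [dif_pos h, dif_pos h, FreeGroup.lift_apply_of]
  · rw [stepT, stepT]
    rw [dif_neg h, dif_neg h, map_inv, lift_Wlet]

lemma psi_inj (h0 : 0 < s) (w : List (Fin s)) (hw0 : (⟨0, h0⟩ : Fin s) ∈ w) :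
    Function.Injective
      (FreeGroup.lift (stepT w FreeGroup.of) : FreeGroup (Fin (s+1)) →* FreeGroup (Fin (s+1))) := by
  apply key_inj
  intro χ hχ
  have hv : ∀ i : Fin (s+1), χ ((stepT w FreeGroup.of) i) = 1 := by
    intro i
    have := DFunLike.congr_fun hχ (FreeGroup.of i)
    simpa [FreeGroup.lift_apply_of] using this
  have hup : ∀ k : Fin (s+1), 0 < (k : ℕ) → χ (FreeGroup.of k) = 1 := by
    intro k hk
    have hlt : ((⟨(k:ℕ)-1, by omega⟩ : Fin (s+1)) : ℕ) < s := by
      have := k.isLt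
      simp only
      omega
    have := hv ⟨(k:ℕ)-1, by omega⟩
    rw [stepT, dif_pos hlt] at this
    convert this using 3
    apply Fin.ext
    simp
    omega
  have hWin : χ (Wlet w FreeGroup.of) = 1 := by
    have := hv ⟨s, by omega⟩
    rw [stepT, dif_neg (by simp)] at this
    simpa using this
  have hprod : χ (Wlet w FreeGroup.of)
      = (χ (FreeGroup.of (⟨0, by omega⟩ : Fin (s+1)))) ^ (w.count ⟨0, h0⟩) := by
    rw [Wlet, map_list_prod, List.map_map,
      list_prod_eq_pow_count w ⟨0, h0⟩ (⇑χ ∘ fun j => FreeGroup.of j.castSucc) (by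
        intro a _ hne
        show χ (FreeGroup.of a.castSucc) = 1
        apply hup
        simp only [Fin.coe_castSucc]
        have : (a : ℕ) ≠ 0 := fun h => hne (Fin.ext h)
        omega)]
    rfl
  have hcount : w.count ⟨0, h0⟩ ≠ 0 := by
    have := List.count_pos_iff.mpr hw0
    omega
  have hbase : χ (FreeGroup.of (⟨0, by omega⟩ : Fin (s+1))) = 1 :=
    multiplicative_pow_eq_one hcount (hprod ▸ hWin)
  apply FreeGroup.ext_hom
  intro k
  show χ (FreeGroup.of k) = 1
  by_cases hk : (k : ℕ) = 0
  · have : k = (⟨0, by omega⟩ : Fin (s+1)) := Fin.ext (by simpa using hk)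
    rw [this]
    exact hbase
  · exact hup k (by omega)

lemma step_preserves {G : Type*} [Group G] (h0 : 0 < s) (w : List (Fin s))
    (hw0 : (⟨0, h0⟩ : Fin s) ∈ w) (c : Fin (s+1) → G)
    (hc : Function.Injective (FreeGroup.lift c : FreeGroup (Fin (s+1)) →* G)) :
    Function.Injective (FreeGroup.lift (stepT w c) : FreeGroup (Fin (s+1)) →* G) := by
  rw [lift_comp_psi]
  rw [MonoidHom.coe_comp]
  exact hc.comp (psi_inj h0 w hw0)





/-- the moving window of seed values -/
def win (w : List (Fin s)) : ℕ → (Fin (s+1) → FreeGroup (Fin (s+1)))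
  | 0 => FreeGroup.of
  | (t+1) => stepT w (win w t)

lemma win_inj (h0 : 0 < s) (w : List (Fin s)) (hw0 : (⟨0, h0⟩ : Fin s) ∈ w) (t : ℕ) :
    Function.Injective (FreeGroup.lift (win w t) :
      FreeGroup (Fin (s+1)) →* FreeGroup (Fin (s+1))) := by
  induction t with
  | zero =>
    show Function.Injective (FreeGroup.lift FreeGroup.of)
    rw [FreeGroup.lift_of_eq_id]
    exact fun a b h => h
  | succ t ih => exact step_preserves h0 w hw0 _ ih

lemma win_shift (w : List (Fin s)) (t : ℕ) (j : ℕ) (hj : j < s) :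
    win w (t+1) ⟨j, by omega⟩ = win w t ⟨j+1, by omega⟩ := by
  show stepT w (win w t) ⟨j, by omega⟩ = _
  rw [stepT, dif_pos (by simpa using hj)]

lemma win_zero_shift (w : List (Fin s)) : ∀ (j : ℕ) (hj : j ≤ s) (t : ℕ),
    win w (t+j) ⟨0, by omega⟩ = win w t ⟨j, by omega⟩ := by
  intro j
  induction j with
  | zero => intro _ t; rfl
  | succ j ih =>
    intro hj t
    have h1 : t + (j+1) = (t+1) + j := by omega
    rw [h1, ih (by omega) (t+1), win_shift w t j (by omega)]

lemma win_top (w : List (Fin s)) (t : ℕ) :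
    win w (t+1) ⟨s, by omega⟩ = (Wlet w (win w t))⁻¹ := by
  show stepT w (win w t) ⟨s, by omega⟩ = _
  rw [stepT, dif_neg (by simp)]

/-- the values assigned to the generators `aₖ`, `k ∈ ℤ` -/
def fseq (w : List (Fin s)) (K : ℕ) : ℤ → FreeGroup (Fin (s+1)) := fun k =>
  if h : (-(K:ℤ) - s + 1) ≤ k then win w ((k - (-(K:ℤ) - s + 1)).toNat) ⟨0, by omega⟩ else 1

lemma coeM_list (w : List (Fin s)) :
    ((do let a ← w; pure ((a : ℕ))) : List ℕ) = w.map Fin.val := by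
  induction w with
  | nil => rfl
  | cons a t ih => simpa using ih

lemma wsub_lift (w : List (Fin s)) (p : ℤ) {G : Type*} [Group G]
    (φ : FreeGroup ℤ →* G) (c : Fin s → G)
    (hc : ∀ j : Fin s, φ (FreeGroup.of (p - s + 1 + (j : ℕ))) = c j) :
    φ (HW.Wsub w p) = (w.map c).prod := by
  rw [HW.Wsub, map_list_prod, List.map_map, coeM_list, List.map_map]
  apply congrArg
  apply List.map_congr_left
  intro j _
  exact hc j

lemma key_cancel (hs : 1 ≤ s) (w : List (Fin s)) (K : ℕ) (p : ℤ) (hp : -(K:ℤ) ≤ p) :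
    (FreeGroup.lift (fseq w K)) (HW.Wsub w p) * fseq w K (p+2) = 1 := by
  set B : ℤ := -(K:ℤ) - s + 1 with hB
  set t₀ : ℕ := (p - s + 1 - B).toNat with ht₀
  have hstep1 : (FreeGroup.lift (fseq w K)) (HW.Wsub w p) = Wlet w (win w t₀) := by
    rw [Wlet]
    apply wsub_lift
    intro j
    rw [FreeGroup.lift_apply_of]
    have hBle : B ≤ p - s + 1 + (j:ℕ) := by omega
    rw [fseq, dif_pos hBle]
    have harith : (p - s + 1 + (j:ℕ) - B).toNat = t₀ + (j:ℕ) := by omega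
    rw [harith, win_zero_shift w (j:ℕ) (by omega) t₀]
    exact congrArg (win w t₀) (by ext; simp)
  have hstep2 : fseq w K (p+2) = (Wlet w (win w t₀))⁻¹ := by
    have hBle : B ≤ p + 2 := by omega
    rw [fseq, dif_pos hBle]
    have harith : (p + 2 - B).toNat = (t₀ + 1) + s := by omega
    rw [harith, win_zero_shift w s (le_refl s) (t₀+1), win_top w t₀]
  rw [hstep1, hstep2, mul_inv_cancel]

lemma relator_killed (hs : 1 ≤ s) (w : List (Fin s)) (m : ℕ) (K : ℕ) (p : ℤ)
    (hp : -(K:ℤ) ≤ p) :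
    (FreeGroup.lift (fseq w K))
      (FreeGroup.of (p + 1) * (HW.Wsub w p * FreeGroup.of (p + 2)) *
        (FreeGroup.of (p + 1))⁻¹ * ((HW.Wsub w p * FreeGroup.of (p + 2)) ^ m)⁻¹) = 1 := by
  have h := key_cancel hs w K p hp
  simp only [map_mul, map_inv, map_pow, FreeGroup.lift_apply_of] at *
  rw [h]
  simp

/-- membership in a normal closure only uses finitely many relators -/
lemma mem_normalClosure_finset {G : Type*} [Group G] {S : Set G} {g : G}
    (h : g ∈ Subgroup.normalClosure S) :
    ∃ T : Finset G, ↑T ⊆ S ∧ g ∈ Subgroup.normalClosure (T : Set G) := by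
  classical
  let U : Subgroup G :=
    { carrier := {x | ∃ T : Finset G, ↑T ⊆ S ∧ x ∈ Subgroup.normalClosure (T : Set G)}
      one_mem' := ⟨∅, by simp, one_mem _⟩
      mul_mem' := by
        rintro a b ⟨T₁, hT₁, ha⟩ ⟨T₂, hT₂, hb⟩
        refine ⟨T₁ ∪ T₂, ?_, ?_⟩
        · intro x hx
          simp only [Finset.coe_union, Set.mem_union, Finset.mem_coe] at hx
          rcases hx with h1 | h1
          · exact hT₁ h1
          · exact hT₂ h1
        · exact mul_mem
            (Subgroup.normalClosure_mono (Finset.coe_subset.mpr Finset.subset_union_left) ha)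
            (Subgroup.normalClosure_mono (Finset.coe_subset.mpr Finset.subset_union_right) hb)
      inv_mem' := by
        rintro a ⟨T₁, hT₁, ha⟩
        exact ⟨T₁, hT₁, inv_mem ha⟩ }
  have hUnormal : U.Normal := by
    constructor
    rintro a ⟨T₁, hT₁, ha⟩ x
    exact ⟨T₁, hT₁, Subgroup.normalClosure_normal.conj_mem a ha x⟩
  have hle : Subgroup.normalClosure S ≤ U := by
    haveI := hUnormal
    apply Subgroup.normalClosure_le_normal
    intro x hx
    exact ⟨{x}, by simpa, Subgroup.subset_normalClosure (by simp)⟩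
  exact hle h


end HWProof

open HW in
/-- Let `s ≥ 1`, `m ≥ 2`, and let `W` be a nontrivial positive word in `x₁, …, xₛ`
(encoded by the nonempty list `w` of its letters) involving both `x₁` and `xₛ`.
Then for every `0 ≤ n ≤ s`, the subgroup of `H_W` generated by `a₀, a₁, …, aₙ` is free of
rank `n + 1`, freely generated by `a₀, …, aₙ`: the canonical homomorphism from the free
group on `n + 1` generators sending the `i`-th generator to `aᵢ` is injective. -/
theorem initial_generators_free (s m : ℕ) (hs : 1 ≤ s) (hm : 2 ≤ m)
    (w : List (Fin s)) (hw : w ≠ [])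
    (hfirst : (⟨0, by omega⟩ : Fin s) ∈ w) (hlast : (⟨s - 1, by omega⟩ : Fin s) ∈ w)
    (n : ℕ) (hn : n ≤ s) :
    Function.Injective
      (FreeGroup.lift (fun i : Fin (n + 1) =>
        (PresentedGroup.of ((i : ℕ) : ℤ) : Hgroup s m w))) := by
  classical
  open HWProof in
  rw [injective_iff_map_eq_one]
  intro g hg
  set rels := HW.HWrels s m w with hrels
  set ι₀ : FreeGroup (Fin (n+1)) →* FreeGroup ℤ :=
    FreeGroup.lift (fun i : Fin (n+1) => FreeGroup.of ((i : ℕ) : ℤ)) with hι₀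
  have hcomm : (PresentedGroup.mk rels).comp ι₀
      = FreeGroup.lift (fun i : Fin (n+1) =>
          (PresentedGroup.of ((i:ℕ):ℤ) : HW.Hgroup s m w)) := by
    apply FreeGroup.ext_hom
    intro i
    rw [MonoidHom.comp_apply, FreeGroup.lift_apply_of, FreeGroup.lift_apply_of]
    rfl
  have hmk1 : PresentedGroup.mk rels (ι₀ g) = 1 := by
    have h1 : PresentedGroup.mk rels (ι₀ g)
        = FreeGroup.lift (fun i : Fin (n+1) =>
            (PresentedGroup.of ((i:ℕ):ℤ) : HW.Hgroup s m w)) g := DFunLike.congr_fun hcomm g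
    exact h1.trans hg
  have hmem : ι₀ g ∈ Subgroup.normalClosure rels := (QuotientGroup.eq_one_iff (ι₀ g)).mp hmk1
  obtain ⟨T, hTsub, hgT⟩ := mem_normalClosure_finset hmem
  have hbound : ∀ r : {x // x ∈ T}, ∃ p : ℤ, (r : FreeGroup ℤ)
      = FreeGroup.of (p + 1) * (HW.Wsub w p * FreeGroup.of (p + 2)) *
        (FreeGroup.of (p + 1))⁻¹ * ((HW.Wsub w p * FreeGroup.of (p + 2)) ^ m)⁻¹ :=
    fun r => hTsub r.2
  choose pf hpf using hbound
  set K : ℕ := Finset.univ.sup (fun r : {x // x ∈ T} => (-(pf r)).toNat) with hK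
  set ψ : FreeGroup ℤ →* FreeGroup (Fin (s+1)) := FreeGroup.lift (fseq w K) with hψ
  have hker : Subgroup.normalClosure (T : Set (FreeGroup ℤ)) ≤ ψ.ker := by
    apply Subgroup.normalClosure_le_normal
    intro r hr
    have hrT : r ∈ T := hr
    have hple : -(K:ℤ) ≤ pf ⟨r, hrT⟩ := by
      have hsup : (-(pf ⟨r, hrT⟩)).toNat ≤ K :=
        Finset.le_sup (f := fun r : {x // x ∈ T} => (-(pf r)).toNat) (Finset.mem_univ (⟨r, hrT⟩ : {x // x ∈ T}))
      omega
    rw [SetLike.mem_coe, MonoidHom.mem_ker]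
    have heq := hpf ⟨r, hrT⟩
    rw [show ((⟨r, hrT⟩ : {x // x ∈ T}) : FreeGroup ℤ) = r from rfl] at heq
    rw [heq]
    exact relator_killed hs w m K (pf ⟨r, hrT⟩) hple
  have hψg : ψ (ι₀ g) = 1 := hker hgT
  set t₁ : ℕ := K + s - 1 with ht₁
  set emb : Fin (n+1) → Fin (s+1) := fun i => ⟨(i:ℕ), by omega⟩ with hemb
  have hcompose : ψ.comp ι₀ = (FreeGroup.lift (win w t₁)).comp (FreeGroup.map emb) := by
    apply FreeGroup.ext_hom
    intro i
    show ψ (ι₀ (FreeGroup.of i)) = (FreeGroup.lift (win w t₁)) (FreeGroup.map emb (FreeGroup.of i))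
    rw [hι₀, FreeGroup.lift_apply_of, hψ, FreeGroup.lift_apply_of, FreeGroup.map.of, FreeGroup.lift_apply_of]
    rw [fseq, dif_pos (by omega)]
    have harith : (((i:ℕ):ℤ) - (-(K:ℤ) - s + 1)).toNat = t₁ + (i:ℕ) := by omega
    rw [harith, win_zero_shift w (i:ℕ) (by omega) t₁]
  have hinj2 : Function.Injective ⇑(ψ.comp ι₀) := by
    rw [hcompose, MonoidHom.coe_comp]
    apply Function.Injective.comp
    · exact win_inj (by omega) w hfirst t₁
    · intro x y hxy
      have hR : ∀ z, FreeGroup.map (fun j : Fin (s+1) =>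
          if h : (j:ℕ) < n+1 then (⟨(j:ℕ), h⟩ : Fin (n+1)) else ⟨0, by omega⟩)
            (FreeGroup.map emb z) = z := by
        intro z
        rw [FreeGroup.map.comp]
        have hcompid : ((fun j : Fin (s+1) =>
            if h : (j:ℕ) < n+1 then (⟨(j:ℕ), h⟩ : Fin (n+1)) else ⟨0, by omega⟩) ∘ emb)
            = fun z : Fin (n+1) => z := by
          funext i
          simp only [Function.comp_apply, hemb]
          rw [dif_pos (by omega)]
        rw [hcompid, FreeGroup.map.id']
      have h1 := hR x
      rw [hxy] at h1
      exact h1.symm.trans (hR y)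
  apply hinj2
  rw [MonoidHom.comp_apply, hψg, map_one]
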